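/- Let r ≥ 3, n ≥ 2, t = ⌈(r-2)n/(r-1)⌉, and λ ∈ [r-1] with n + λ ≡ 0 (mod r-1). Let C ⊆ [q]^n be an r-focal-free code and let C₀ be the set of codewords x ∈ C such that every (t-1)-subsequence of x is a non-own subsequence (i.e., for every T ∈ binom([n], t-1) there is y ∈ C, y ≠ x, with x_T = y_T). Then every x ∈ C₀ has at least binom(n,t) − m(n, n−t, λ) own t-subsequences: sets T ∈ binom([n],t) such that no y ∈ C \ {x} satisfies y_T = x_T. -/
import Mathlib


open Finset

/-- A code `C ⊆ [q]^n` is `r`-focal-free if it contains no `r` distinct vectors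
`x 0, ..., x (r-1)` such that in every coordinate, at least `r - 2` of
`x 1, ..., x (r-1)` agree with the focus `x 0`. -/
def IsFocalFreeCode (r n q : ℕ) (C : Finset (Fin n → Fin q)) : Prop :=
  ¬ ∃ (x₀ : Fin n → Fin q) (x : Fin (r - 1) → (Fin n → Fin q)), x₀ ∈ C ∧ (∀ j, x j ∈ C) ∧
      Function.Injective x ∧ (∀ j, x j ≠ x₀) ∧
      ∀ i : Fin n, r - 2 ≤ (Finset.univ.filter fun j : Fin (r - 1) => x j i = x₀ i).card

/-- `matchNum n s lam` is the maximum number of edges of an `s`-uniform hypergraph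
on `n` vertices containing no `lam` pairwise disjoint edges. -/
noncomputable def matchNum (n s lam : ℕ) : ℕ :=
  sSup {c | ∃ G : Finset (Finset (Fin n)), (∀ e ∈ G, e.card = s) ∧
    (¬ ∃ M : Finset (Finset (Fin n)), M ⊆ G ∧ M.card = lam ∧
      (M : Set (Finset (Fin n))).Pairwise Disjoint) ∧ G.card = c}

/-- Every codeword of an r-focal-free code with no own (t-1)-subsequence has
many own t-subsequences. -/
lemma key {n q r k lam : ℕ} (hr : 3 ≤ r) (hk : 1 ≤ k) (hkn : k ≤ n)
    (hlam1 : 1 ≤ lam) (hlam2 : lam ≤ r - 1) (hn : n + lam = k * (r - 1))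
    (C : Finset (Fin n → Fin q)) (hfree : IsFocalFreeCode r n q C)
    (x : Fin n → Fin q) (hx : x ∈ C)
    (hno : ∀ T : Finset (Fin n), T.card = n - k →
      ∃ y ∈ C, y ≠ x ∧ ∀ i ∈ T, y i = x i)
    (M : Finset (Finset (Fin n)))
    (hM : ∀ S ∈ M, S.card = k - 1 ∧ ∃ y ∈ C, y ≠ x ∧ ∀ i ∉ S, y i = x i)
    (hMcard : M.card = lam) (hMdisj : (M : Set (Finset (Fin n))).Pairwise Disjoint) :
    False := by
  classical
  -- the union of the matching
  set U : Finset (Fin n) := M.biUnion (fun S => S) with hU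
  have hUcard : U.card = lam * (k - 1) := by
    rw [hU, Finset.card_biUnion (fun a ha b hb hab => hMdisj ha hb hab)]
    rw [Finset.sum_congr rfl (fun S hS => (hM S hS).1)]
    simp [hMcard, mul_comm]
  set R : Finset (Fin n) := Finset.univ \ U with hR
  have hUR : ∀ i ∈ U, i ∉ R := by intro i hi; simp [hR, hi]
  have hRcard : R.card = (r - 1 - lam) * k := by
    have hUsub : U ⊆ Finset.univ := Finset.subset_univ _
    have h1 : R.card = n - lam * (k - 1) := by
      rw [hR, Finset.card_sdiff_of_subset hUsub, hUcard]; simp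
    have e1 : (r - 1 - lam) * k + lam * k = (r - 1) * k := by
      rw [← add_mul, Nat.sub_add_cancel hlam2]
    have e2 : lam * (k - 1) + lam = lam * k := by
      have hkk : k - 1 + 1 = k := Nat.sub_add_cancel hk
      calc lam * (k - 1) + lam = lam * ((k - 1) + 1) := by ring
        _ = lam * k := by rw [hkk]
    have e3 : k * (r - 1) = (r - 1) * k := mul_comm _ _
    omega
  -- partition R into (r-1-lam) blocks of size k
  have g : Fin (r - 1 - lam) × Fin k ≃ {i // i ∈ R} :=
    (finProdFinEquiv.trans (finCongr hRcard.symm)).trans R.equivFin.symm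
  set f : Fin (r - 1 - lam) → Finset (Fin n) :=
    fun j => Finset.univ.image (fun p : Fin k => (g (j, p) : Fin n)) with hf
  have hfmem : ∀ j i, i ∈ f j ↔ ∃ p, (g (j, p) : Fin n) = i := by
    intro j i; simp [hf]
  have hfsub : ∀ j, f j ⊆ R := by
    intro j i hi
    rw [hfmem] at hi
    obtain ⟨p, hp⟩ := hi
    rw [← hp]; exact (g (j, p)).2
  have hfcard : ∀ j, (f j).card = k := by
    intro j
    rw [hf]
    rw [Finset.card_image_of_injective _ (fun p p' hpp => by
      have := g.injective (Subtype.ext hpp)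
      exact (Prod.mk.injEq _ _ _ _ ▸ this).2)]
    simp
  have hfdisj : ∀ j j', j ≠ j' → Disjoint (f j) (f j') := by
    intro j j' hjj
    rw [Finset.disjoint_left]
    intro i hi hi'
    rw [hfmem] at hi hi'
    obtain ⟨p, hp⟩ := hi
    obtain ⟨p', hp'⟩ := hi'
    have := g.injective (Subtype.ext (hp.trans hp'.symm))
    exact hjj ((Prod.mk.injEq _ _ _ _ ▸ this).1)
  -- codewords for blocks
  have hz0 : ∀ j : Fin (r - 1 - lam), ∃ y ∈ C, y ≠ x ∧ ∀ i ∈ Finset.univ \ f j, y i = x i := by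
    intro j
    apply hno
    rw [Finset.card_sdiff_of_subset (Finset.subset_univ _), hfcard]; simp
  choose z hzC hzx hza using hz0
  -- codewords for matching edges
  have hy0 : ∀ s : {S // S ∈ M}, ∃ y ∈ C, y ≠ x ∧ ∀ i ∉ s.1, y i = x i :=
    fun s => (hM s.1 s.2).2
  choose y hyC hyx hya using hy0
  -- enumeration of M
  have eM : Fin lam ≃ {S // S ∈ M} := (finCongr hMcard.symm).trans M.equivFin.symm
  -- combined families over the sum type
  set A' : Fin lam ⊕ Fin (r - 1 - lam) → Finset (Fin n) :=
    fun s => Sum.elim (fun a => ((eM a : {S // S ∈ M}) : Finset (Fin n))) f s with hA'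
  set w' : Fin lam ⊕ Fin (r - 1 - lam) → (Fin n → Fin q) :=
    fun s => Sum.elim (fun a => y (eM a)) z s with hw'
  have hw'C : ∀ s, w' s ∈ C := by rintro (a | b) <;> simp [hw', hyC, hzC]
  have hw'x : ∀ s, w' s ≠ x := by rintro (a | b) <;> simp [hw', hyx, hzx]
  have hw'A : ∀ s i, w' s i ≠ x i → i ∈ A' s := by
    rintro (a | b) i hi
    · by_contra hc
      exact hi (hya (eM a) i (by simpa [hA'] using hc))
    · by_contra hc
      exact hi (hza b i (by simpa [hA'] using hc))
  have hA'disj : ∀ s s', s ≠ s' → Disjoint (A' s) (A' s') := by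
    have hmixed : ∀ (a : Fin lam) (b : Fin (r - 1 - lam)),
        Disjoint ((eM a : {S // S ∈ M}) : Finset (Fin n)) (f b) := by
      intro a b
      rw [Finset.disjoint_left]
      intro i hi hib
      have hiU : i ∈ U := by
        rw [hU]
        exact Finset.mem_biUnion.2 ⟨_, (eM a).2, hi⟩
      exact hUR i hiU (hfsub b hib)
    rintro (a | b) (a' | b') hss
    · have ha : a ≠ a' := fun h => hss (by rw [h])
      have : ((eM a : {S // S ∈ M}) : Finset (Fin n)) ≠ ((eM a' : {S // S ∈ M}) : Finset (Fin n)) := by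
        intro h
        exact ha (eM.injective (Subtype.ext h))
      exact hMdisj (eM a).2 (eM a').2 this
    · exact hmixed a b'
    · exact (hmixed a' b).symm
    · exact hfdisj b b' (fun h => hss (by rw [h]))
  have hw'inj : Function.Injective w' := by
    intro s s' hss
    by_contra hne
    apply hw'x s
    funext i
    by_contra hi
    have h1 := hw'A s i hi
    have h2 := hw'A s' i (by rw [← hss]; exact hi)
    exact Finset.disjoint_left.1 (hA'disj s s' hne) h1 h2
  -- transfer to Fin (r-1)
  have hsum : lam + (r - 1 - lam) = r - 1 := by omega
  have E : Fin lam ⊕ Fin (r - 1 - lam) ≃ Fin (r - 1) :=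
    finSumFinEquiv.trans (finCongr hsum)
  apply hfree
  refine ⟨x, fun j => w' (E.symm j), hx, fun j => hw'C _, ?_, fun j => hw'x _, ?_⟩
  · exact hw'inj.comp E.symm.injective
  · intro i
    have hle : (Finset.univ.filter fun j : Fin (r - 1) => ¬ w' (E.symm j) i = x i).card ≤ 1 := by
      apply Finset.card_le_one.2
      intro j hj j' hj'
      rw [Finset.mem_filter] at hj hj'
      have h1 := hw'A _ i hj.2
      have h2 := hw'A _ i hj'.2
      by_contra hne
      have hne' : E.symm j ≠ E.symm j' := fun h => hne (by simpa using congrArg E h)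
      exact Finset.disjoint_left.1 (hA'disj _ _ hne') h1 h2
    have htot := Finset.card_filter_add_card_filter_not
      (s := (Finset.univ : Finset (Fin (r - 1))))
      (p := fun j : Fin (r - 1) => w' (E.symm j) i = x i)
    have hcard : (Finset.univ : Finset (Fin (r - 1))).card = r - 1 := by simp
    show r - 2 ≤ (Finset.univ.filter fun j : Fin (r - 1) => w' (E.symm j) i = x i).card
    omega

theorem many_own_t_subsequences {n q r t lam : ℕ} (hr : 3 ≤ r) (hn : 2 ≤ n)
    (ht : t = ((r - 2) * n + r - 2) / (r - 1))
    (hlam1 : 1 ≤ lam) (hlam2 : lam ≤ r - 1) (hlam : (n + lam) % (r - 1) = 0)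
    (C : Finset (Fin n → Fin q)) (hfree : IsFocalFreeCode r n q C)
    (x : Fin n → Fin q) (hx : x ∈ C)
    (hno : ∀ T : Finset (Fin n), T.card = t - 1 →
      ∃ y ∈ C, y ≠ x ∧ ∀ i ∈ T, y i = x i) :
    n.choose t - matchNum n (n - t) lam ≤
      ((Finset.univ.powersetCard t).filter fun T : Finset (Fin n) =>
        ∀ y ∈ C, y ≠ x → ∃ i ∈ T, y i ≠ x i).card := by
  classical
  set k := (n + lam) / (r - 1) with hkdef
  have hrpos : 0 < r - 1 := by omega
  have hdvd : n + lam = k * (r - 1) := by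
    rw [hkdef, Nat.div_mul_cancel (Nat.dvd_of_mod_eq_zero hlam)]
  have hk : 1 ≤ k := by
    rcases Nat.eq_zero_or_pos k with h | h
    · rw [h, zero_mul] at hdvd; omega
    · exact h
  have hkn : k ≤ n := by
    have hks : k = (k - 1) + 1 := by omega
    have h1 : k * (r - 1) = (k - 1) * (r - 1) + (r - 1) := by
      nth_rw 1 [hks]; rw [add_mul, one_mul]
    have h2 : (k - 1) * 2 ≤ (k - 1) * (r - 1) := Nat.mul_le_mul_left _ (by omega)
    omega
  -- compute t
  have hnum : (r - 2) * n + r - 2 = (r - 2) * (n + 1) := by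
    rw [Nat.add_sub_assoc (by omega : 2 ≤ r), mul_add, mul_one]
  have hkey : (r - 2) * (n + 1) = (r - 1) * (n + 1 - k) + (lam - 1) := by
    zify [show 2 ≤ r by omega, show 1 ≤ r by omega, show k ≤ n + 1 by omega, hlam1]
    zify [show 1 ≤ r by omega] at hdvd
    linear_combination -hdvd
  have htval : t = n + 1 - k := by
    rw [ht, hnum, hkey, Nat.mul_add_div (by omega), Nat.div_eq_of_lt (by omega)]
    omega
  have ht1 : t - 1 = n - k := by omega
  have hnt : n - t = k - 1 := by omega
  -- the counting
  set P := (Finset.univ.powersetCard t : Finset (Finset (Fin n))) with hP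
  set pred := fun T : Finset (Fin n) => ∀ y ∈ C, y ≠ x → ∃ i ∈ T, y i ≠ x i with hpred
  have hPcard : P.card = n.choose t := by simp [hP]
  have hsplit := Finset.card_filter_add_card_filter_not (s := P) (p := pred)
  set nonown := P.filter (fun T => ¬ pred T) with hnonown
  set G := nonown.image (fun T => Finset.univ \ T) with hG
  have hcompl : ∀ T ∈ P, Finset.univ \ (Finset.univ \ T) = T := by
    intro T hT
    have : T ⊆ Finset.univ := (Finset.mem_powersetCard.1 hT).1
    exact Finset.sdiff_sdiff_eq_self this
  have hGcard : G.card = nonown.card := by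
    apply Finset.card_image_of_injOn
    intro T hT T' hT' h
    have hT1 : T ∈ P := (Finset.mem_filter.1 (Finset.mem_coe.1 hT)).1
    have hT2 : T' ∈ P := (Finset.mem_filter.1 (Finset.mem_coe.1 hT')).1
    have h' : Finset.univ \ T = Finset.univ \ T' := h
    rw [← hcompl T hT1, ← hcompl T' hT2, h']
  have hGmem : ∀ S ∈ G, S.card = k - 1 ∧ ∃ y ∈ C, y ≠ x ∧ ∀ i ∉ S, y i = x i := by
    intro S hS
    rw [hG, Finset.mem_image] at hS
    obtain ⟨T, hT, hTS⟩ := hS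
    rw [Finset.mem_filter] at hT
    obtain ⟨hTP, hTnp⟩ := hT
    obtain ⟨hTsub, hTcard⟩ := Finset.mem_powersetCard.1 hTP
    constructor
    · rw [← hTS, Finset.card_sdiff_of_subset hTsub, hTcard]
      simpa using hnt
    · have hTnp' : ∃ y ∈ C, y ≠ x ∧ ∀ i ∈ T, y i = x i := by
        by_contra hc
        apply hTnp
        intro y hyC hyx
        by_contra hni
        push_neg at hni
        exact hc ⟨y, hyC, hyx, hni⟩
      obtain ⟨y, hyC, hyx, hya⟩ := hTnp'
      refine ⟨y, hyC, hyx, fun i hi => hya i ?_⟩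
      rw [← hTS] at hi
      simpa using hi
  have hGfree : ¬ ∃ M : Finset (Finset (Fin n)), M ⊆ G ∧ M.card = lam ∧
      (M : Set (Finset (Fin n))).Pairwise Disjoint := by
    rintro ⟨M, hMG, hMcard, hMdisj⟩
    exact key hr hk hkn hlam1 hlam2 hdvd C hfree x hx
      (fun T hT => hno T (by omega)) M (fun S hS => hGmem S (hMG hS)) hMcard hMdisj
  have hle : G.card ≤ matchNum n (n - t) lam := by
    apply le_csSup
    · refine ⟨(Finset.univ : Finset (Finset (Fin n))).card, ?_⟩
      rintro c ⟨G', -, -, rfl⟩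
      exact Finset.card_le_univ G'
    · refine ⟨G, fun e he => ?_, hGfree, rfl⟩
      rw [(hGmem e he).1]; omega
  have hfinal : (P.filter pred).card = n.choose t - nonown.card := by omega
  rw [show ((Finset.univ.powersetCard t).filter fun T : Finset (Fin n) =>
        ∀ y ∈ C, y ≠ x → ∃ i ∈ T, y i ≠ x i) = P.filter pred from rfl, hfinal]
  omega
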